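/- Let E be a real normed space, f : E → ℝ a function, x, d ∈ E with d ≠ 0, and g : E → ℝ a continuous linear functional with G := -g(d) ≥ 0. Let Λ > 0, set t := min{ G/(Λ‖d‖²), 1 }, and assume the sufficient decrease inequality f(x + t·d) ≤ f(x) + t·g(d) + (Λ/2)·t²·‖d‖² holds. Then min{ G/2, G²/(2Λ‖d‖²) } ≤ f(x) - f(x + t·d). -/

import Mathlib

/-- Per-iteration progress bound for the constrained variant:
with `G = -g d ≥ 0`, `t = min (G/(Λ‖d‖²)) 1` and the sufficient decrease inequality,
one has `min (G/2) (G²/(2Λ‖d‖²)) ≤ f x - f (x + t • d)`. -/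
theorem adaptive_step_constrained_progress
    {E : Type*} [NormedAddCommGroup E] [NormedSpace ℝ E]
    (f : E → ℝ) (x d : E) (hd : d ≠ 0)
    (g : E →L[ℝ] ℝ) (G : ℝ) (hG : G = -(g d)) (hGnonneg : 0 ≤ G)
    (Λ : ℝ) (hΛ : 0 < Λ)
    (t : ℝ) (ht : t = min (G / (Λ * ‖d‖ ^ 2)) 1)
    (hdec : f (x + t • d) ≤ f x + t * g d + Λ / 2 * t ^ 2 * ‖d‖ ^ 2) :
    min (G / 2) (G ^ 2 / (2 * Λ * ‖d‖ ^ 2)) ≤ f x - f (x + t • d) := by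
  have hdn : (0:ℝ) < ‖d‖ := norm_pos_iff.mpr hd
  have hdpos : (0:ℝ) < ‖d‖ ^ 2 := by positivity
  have hD : (0:ℝ) < Λ * ‖d‖ ^ 2 := by positivity
  have hgd : g d = -G := by rw [hG]; ring
  rw [hgd] at hdec
  rcases le_or_gt (G / (Λ * ‖d‖ ^ 2)) 1 with h | h
  · have ht' : t = G / (Λ * ‖d‖ ^ 2) := by rw [ht, min_eq_left h]
    have hGle : G ≤ Λ * ‖d‖ ^ 2 := (div_le_one hD).mp h
    have hmin : min (G / 2) (G ^ 2 / (2 * Λ * ‖d‖ ^ 2)) = G ^ 2 / (2 * Λ * ‖d‖ ^ 2) := by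
      apply min_eq_right
      rw [div_le_div_iff₀ (by positivity) (by norm_num)]
      nlinarith
    rw [hmin]
    have ht2 : t * (Λ * ‖d‖ ^ 2) = G := by
      rw [ht', div_mul_cancel₀ _ (ne_of_gt hD)]
    have hkey : G ^ 2 / (2 * Λ * ‖d‖ ^ 2) = t * G - Λ / 2 * t ^ 2 * ‖d‖ ^ 2 := by
      field_simp [ht']
      rw [← ht2]; ring
    nlinarith
  · have ht' : t = 1 := by rw [ht, min_eq_right h.le]
    have hGgt : Λ * ‖d‖ ^ 2 < G := (one_lt_div hD).mp h
    have hmin : min (G / 2) (G ^ 2 / (2 * Λ * ‖d‖ ^ 2)) ≤ G / 2 := min_le_left _ _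
    refine hmin.trans ?_
    rw [ht'] at hdec ⊢
    nlinarith
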